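/- Let D be a non-trivial (v,k,λ)-symmetric design. Then the flag-graph Γ₁(D) has exactly v·k vertices, is 2(k−1)-regular, any two adjacent vertices have exactly k−2 common neighbours, and any two distinct non-adjacent vertices have at most two common neighbours; if moreover λ = 1, any two distinct non-adjacent vertices have at most one common neighbour. -/

import Mathlib

/-- A `(v,b,r,k,lam)`-balanced incomplete block design: a finite set of `v` points and a
family of `b` distinct blocks, each block a `k`-element subset of the points with
`1 < k < v`, such that every point lies in exactly `r` blocks and every pair of distinct
points is contained in exactly `lam` blocks (all parameters positive). -/
structure BIBD (v b r k lam : ℕ) where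
  P : Type
  [fintypeP : Fintype P]
  [decEqP : DecidableEq P]
  blocks : Finset (Finset P)
  card_points : Fintype.card P = v
  card_blocks : blocks.card = b
  block_size : ∀ c ∈ blocks, c.card = k
  one_lt_k : 1 < k
  k_lt_v : k < v
  lam_pos : 0 < lam
  point_deg : ∀ p : P, (blocks.filter (fun c => p ∈ c)).card = r
  pair_deg : ∀ p q : P, p ≠ q → (blocks.filter (fun c => p ∈ c ∧ q ∈ c)).card = lam

attribute [instance] BIBD.fintypeP BIBD.decEqP

variable {v b r k lam : ℕ}

/-- A flag of a BIBD: an incident point-block pair `(p, c)` with `p ∈ c`. -/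
def BIBD.Flag (D : BIBD v b r k lam) : Type :=
  {pc : D.P × Finset D.P // pc.2 ∈ D.blocks ∧ pc.1 ∈ pc.2}

instance (D : BIBD v b r k lam) : Fintype D.Flag :=
  inferInstanceAs (Fintype {pc : D.P × Finset D.P // pc.2 ∈ D.blocks ∧ pc.1 ∈ pc.2})

instance (D : BIBD v b r k lam) : DecidableEq D.Flag :=
  inferInstanceAs (DecidableEq {pc : D.P × Finset D.P // pc.2 ∈ D.blocks ∧ pc.1 ∈ pc.2})

/-- The flag-graph `Γ₁(D)`: vertices are the flags of `D`; two distinct flags `(p,c)` and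
`(q,d)` are adjacent iff `p = q` or `c = d`. -/
def BIBD.Gamma1 (D : BIBD v b r k lam) : SimpleGraph D.Flag where
  Adj x y := x ≠ y ∧ (x.1.1 = y.1.1 ∨ x.1.2 = y.1.2)
  symm := ⟨fun _ _ h => ⟨h.1.symm, h.2.imp Eq.symm Eq.symm⟩⟩
  loopless := ⟨fun _ h => h.1 rfl⟩

instance (D : BIBD v b r k lam) : DecidableRel D.Gamma1.Adj :=
  fun x y => inferInstanceAs (Decidable (x ≠ y ∧ (x.1.1 = y.1.1 ∨ x.1.2 = y.1.2)))

namespace BIBD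

variable {v b r k lam : ℕ} (D : BIBD v b r k lam)

lemma flag_val_inj : Function.Injective (fun z : D.Flag => z.1) :=
  Subtype.val_injective

lemma card_flag : Fintype.card D.Flag = v * r := by
  have e : D.Flag ≃ Σ p : D.P, {c : Finset D.P // c ∈ D.blocks.filter (fun c => p ∈ c)} :=
    { toFun := fun f => ⟨f.1.1, ⟨f.1.2, Finset.mem_filter.2 ⟨f.2.1, f.2.2⟩⟩⟩
      invFun := fun s => ⟨(s.1, s.2.1), (Finset.mem_filter.1 s.2.2).1,
        (Finset.mem_filter.1 s.2.2).2⟩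
      left_inv := fun f => rfl
      right_inv := fun s => rfl }
  rw [Fintype.card_congr e, Fintype.card_sigma]
  have h : ∀ p : D.P,
      Fintype.card {c : Finset D.P // c ∈ D.blocks.filter (fun c => p ∈ c)} = r := fun p => by
    rw [Fintype.card_coe, D.point_deg]
  rw [Finset.sum_congr rfl (fun p _ => h p), Finset.sum_const, Finset.card_univ,
    D.card_points, smul_eq_mul]

lemma mem_val_image_neighbor {x : D.Flag} {qe : D.P × Finset D.P} :
    qe ∈ (D.Gamma1.neighborFinset x).image (fun z : D.Flag => z.1) ↔
      (qe.2 ∈ D.blocks ∧ qe.1 ∈ qe.2) ∧ qe ≠ x.1 ∧ (x.1.1 = qe.1 ∨ x.1.2 = qe.2) := by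
  simp only [Finset.mem_image, SimpleGraph.mem_neighborFinset]
  constructor
  · rintro ⟨z, hz, rfl⟩
    exact ⟨z.2, fun h => hz.1 (Subtype.ext h.symm), hz.2⟩
  · rintro ⟨h1, h2, h3⟩
    exact ⟨⟨qe, h1⟩, ⟨fun h => h2 (congrArg Subtype.val h).symm, h3⟩, rfl⟩

lemma val_image_neighborFinset (x : D.Flag) :
    (D.Gamma1.neighborFinset x).image (fun z : D.Flag => z.1) =
      ((D.blocks.filter (fun e => x.1.1 ∈ e)).erase x.1.2).image (fun e => (x.1.1, e)) ∪
      (x.1.2.erase x.1.1).image (fun q => (q, x.1.2)) := by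
  ext ⟨q, e⟩
  rw [mem_val_image_neighbor]
  simp only [Finset.mem_union, Finset.mem_image, Finset.mem_erase, Finset.mem_filter,
    Prod.mk.injEq]
  constructor
  · rintro ⟨⟨he, hq⟩, hne, (h | h)⟩
    · subst h
      refine Or.inl ⟨e, ⟨?_, he, hq⟩, rfl, rfl⟩
      intro hce
      exact hne (by rw [hce])
    · subst h
      refine Or.inr ⟨q, ⟨?_, hq⟩, rfl, rfl⟩
      intro hpq
      exact hne (by rw [hpq])
  · rintro (⟨a, ⟨hac, ha, hpa⟩, h1, h2⟩ | ⟨s, ⟨hsp, hs⟩, h1, h2⟩)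
    · subst h1; subst h2
      refine ⟨⟨ha, hpa⟩, ?_, Or.inl rfl⟩
      intro h
      exact hac (congrArg Prod.snd h)
    · subst h1; subst h2
      refine ⟨⟨x.2.1, hs⟩, ?_, Or.inr rfl⟩
      intro h
      exact hsp (congrArg Prod.fst h)

lemma degree_eq (x : D.Flag) : D.Gamma1.degree x = (r - 1) + (k - 1) := by
  have himg := congrArg Finset.card (D.val_image_neighborFinset x)
  rw [Finset.card_image_of_injective _ D.flag_val_inj] at himg
  have hdisj : Disjoint
      (((D.blocks.filter (fun e => x.1.1 ∈ e)).erase x.1.2).image (fun e => (x.1.1, e)))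
      ((x.1.2.erase x.1.1).image (fun q => (q, x.1.2))) := by
    rw [Finset.disjoint_left]
    rintro ⟨q, e⟩ h1 h2
    simp only [Finset.mem_image, Finset.mem_erase, Prod.mk.injEq] at h1 h2
    obtain ⟨a, ⟨hac, _⟩, _, rfl⟩ := h1
    obtain ⟨s, _, _, h⟩ := h2
    exact hac h.symm
  have hinj1 : Function.Injective (fun e : Finset D.P => (x.1.1, e)) :=
    fun a b h => by simpa using h
  have hinj2 : Function.Injective (fun q : D.P => (q, x.1.2)) :=
    fun a b h => by simpa using h
  rw [SimpleGraph.degree, himg, Finset.card_union_of_disjoint hdisj,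
    Finset.card_image_of_injective _ hinj1, Finset.card_image_of_injective _ hinj2,
    Finset.card_erase_of_mem (Finset.mem_filter.2 ⟨x.2.1, x.2.2⟩),
    Finset.card_erase_of_mem x.2.2, D.point_deg, D.block_size _ x.2.1]

lemma val_image_inter_point (x y : D.Flag) (hp : x.1.1 = y.1.1) (hne : x ≠ y) :
    (D.Gamma1.neighborFinset x ∩ D.Gamma1.neighborFinset y).image (fun z : D.Flag => z.1) =
      (((D.blocks.filter (fun e => x.1.1 ∈ e)).erase x.1.2).erase y.1.2).image
        (fun e => (x.1.1, e)) := by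
  have hcd : x.1.2 ≠ y.1.2 := by
    intro h
    exact hne (Subtype.ext (Prod.ext hp h))
  ext ⟨s, e⟩
  rw [Finset.image_inter _ _ D.flag_val_inj, Finset.mem_inter,
    mem_val_image_neighbor, mem_val_image_neighbor]
  simp only [Finset.mem_image, Finset.mem_erase, Finset.mem_filter, Prod.mk.injEq]
  constructor
  · rintro ⟨⟨⟨he, hs⟩, hnx, (hx | hx)⟩, ⟨-, hny, (hy | hy)⟩⟩
    · subst hx
      refine ⟨e, ⟨?_, ?_, he, hs⟩, rfl, rfl⟩
      · intro h; exact hny (by rw [hp, h])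
      · intro h; exact hnx (by rw [h])
    · exact absurd (Prod.ext (hx.symm.trans hp) hy.symm) hny
    · exact absurd (Prod.ext (hy.symm.trans hp.symm) hx.symm) hnx
    · exact absurd (hx.trans hy.symm) hcd
  · rintro ⟨a, ⟨had, hac, ha, hpa⟩, h1, h2⟩
    subst h1; subst h2
    refine ⟨⟨⟨ha, hpa⟩, fun h => hac (congrArg Prod.snd h), Or.inl rfl⟩,
      ⟨⟨ha, hpa⟩, fun h => had (congrArg Prod.snd h), Or.inl hp.symm⟩⟩

lemma val_image_inter_block (x y : D.Flag) (hc : x.1.2 = y.1.2) (hne : x ≠ y) :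
    (D.Gamma1.neighborFinset x ∩ D.Gamma1.neighborFinset y).image (fun z : D.Flag => z.1) =
      ((x.1.2.erase x.1.1).erase y.1.1).image (fun s => (s, x.1.2)) := by
  have hpq : x.1.1 ≠ y.1.1 := by
    intro h
    exact hne (Subtype.ext (Prod.ext h hc))
  ext ⟨s, e⟩
  rw [Finset.image_inter _ _ D.flag_val_inj, Finset.mem_inter,
    mem_val_image_neighbor, mem_val_image_neighbor]
  simp only [Finset.mem_image, Finset.mem_erase, Prod.mk.injEq]
  constructor
  · rintro ⟨⟨⟨he, hs⟩, hnx, (hx | hx)⟩, ⟨-, hny, (hy | hy)⟩⟩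
    · exact absurd (hx.trans hy.symm) hpq
    · exact absurd (Prod.ext hx.symm (hy.symm.trans hc.symm)) hnx
    · exact absurd (Prod.ext hy.symm (hx.symm.trans hc)) hny
    · subst hx
      refine ⟨s, ⟨?_, ?_, hs⟩, rfl, rfl⟩
      · intro h; exact hny (by rw [hc, h])
      · intro h; exact hnx (by rw [h])
  · rintro ⟨a, ⟨haq, hap, ha⟩, h1, h2⟩
    subst h1; subst h2
    refine ⟨⟨⟨x.2.1, ha⟩, fun h => hap (congrArg Prod.fst h), Or.inr rfl⟩,
      ⟨⟨x.2.1, ha⟩, fun h => haq (congrArg Prod.fst h), Or.inr hc.symm⟩⟩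

lemma val_image_inter_subset (x y : D.Flag) (hp : x.1.1 ≠ y.1.1) (hc : x.1.2 ≠ y.1.2) :
    (D.Gamma1.neighborFinset x ∩ D.Gamma1.neighborFinset y).image (fun z : D.Flag => z.1) ⊆
      {(x.1.1, y.1.2), (y.1.1, x.1.2)} := by
  rintro ⟨s, e⟩ h
  rw [Finset.image_inter _ _ D.flag_val_inj, Finset.mem_inter,
    mem_val_image_neighbor, mem_val_image_neighbor] at h
  obtain ⟨⟨-, -, (hx | hx)⟩, ⟨-, -, (hy | hy)⟩⟩ := h
  · exact absurd (hx.trans hy.symm) hp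
  · simp only [Finset.mem_insert, Finset.mem_singleton, Prod.mk.injEq]
    exact Or.inl ⟨hx.symm, hy.symm⟩
  · simp only [Finset.mem_insert, Finset.mem_singleton, Prod.mk.injEq]
    exact Or.inr ⟨hy.symm, hx.symm⟩
  · exact absurd (hx.trans hy.symm) hc

end BIBD

/-- For a non-trivial `(v,k,λ)`-symmetric design `D`, the flag-graph `Γ₁(D)` has `v·k`
vertices, is `2(k-1)`-regular, adjacent vertices have exactly `k-2` common neighbours,
distinct non-adjacent vertices have at most two common neighbours, and if `λ = 1` then
distinct non-adjacent vertices have at most one common neighbour. -/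
theorem flagGraph_symmetric_design_qsrg (D : BIBD v v k k lam) (hnt : 1 < v - k) :
    Fintype.card D.Flag = v * k ∧
    (∀ x : D.Flag, D.Gamma1.degree x = 2 * (k - 1)) ∧
    (∀ x y : D.Flag, D.Gamma1.Adj x y →
      (D.Gamma1.neighborFinset x ∩ D.Gamma1.neighborFinset y).card = k - 2) ∧
    (∀ x y : D.Flag, x ≠ y → ¬ D.Gamma1.Adj x y →
      (D.Gamma1.neighborFinset x ∩ D.Gamma1.neighborFinset y).card ≤ 2) ∧
    (lam = 1 → ∀ x y : D.Flag, x ≠ y → ¬ D.Gamma1.Adj x y →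
      (D.Gamma1.neighborFinset x ∩ D.Gamma1.neighborFinset y).card ≤ 1) := by
  refine ⟨by rw [D.card_flag], fun x => by rw [D.degree_eq, two_mul], ?_, ?_, ?_⟩
  · -- adjacent vertices: k - 2 common neighbours
    intro x y hxy
    have hne : x ≠ y := hxy.1
    rw [← Finset.card_image_of_injective
      (D.Gamma1.neighborFinset x ∩ D.Gamma1.neighborFinset y) D.flag_val_inj]
    rcases hxy.2 with hp | hc
    · have hinj : Function.Injective (fun e : Finset D.P => (x.1.1, e)) :=
        fun a b h => by simpa using h
      have hcd : y.1.2 ≠ x.1.2 := fun h => hne (Subtype.ext (Prod.ext hp h.symm))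
      rw [D.val_image_inter_point x y hp hne, Finset.card_image_of_injective _ hinj,
        Finset.card_erase_of_mem (Finset.mem_erase.2 ⟨hcd,
          Finset.mem_filter.2 ⟨y.2.1, hp ▸ y.2.2⟩⟩),
        Finset.card_erase_of_mem (Finset.mem_filter.2 ⟨x.2.1, x.2.2⟩), D.point_deg]
      omega
    · have hinj : Function.Injective (fun s : D.P => (s, x.1.2)) :=
        fun a b h => by simpa using h
      have hpq : y.1.1 ≠ x.1.1 := fun h => hne (Subtype.ext (Prod.ext h.symm hc))
      rw [D.val_image_inter_block x y hc hne, Finset.card_image_of_injective _ hinj,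
        Finset.card_erase_of_mem (Finset.mem_erase.2 ⟨hpq, hc ▸ y.2.2⟩),
        Finset.card_erase_of_mem x.2.2, D.block_size _ x.2.1]
      omega
  · -- non-adjacent: at most 2
    intro x y hne hadj
    have hp : x.1.1 ≠ y.1.1 := fun h => hadj ⟨hne, Or.inl h⟩
    have hc : x.1.2 ≠ y.1.2 := fun h => hadj ⟨hne, Or.inr h⟩
    rw [← Finset.card_image_of_injective
      (D.Gamma1.neighborFinset x ∩ D.Gamma1.neighborFinset y) D.flag_val_inj]
    refine le_trans (Finset.card_le_card (D.val_image_inter_subset x y hp hc)) ?_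
    refine le_trans (Finset.card_insert_le _ _) ?_
    simp
  · -- lam = 1: at most 1
    intro hlam x y hne hadj
    have hp : x.1.1 ≠ y.1.1 := fun h => hadj ⟨hne, Or.inl h⟩
    have hc : x.1.2 ≠ y.1.2 := fun h => hadj ⟨hne, Or.inr h⟩
    rw [← Finset.card_image_of_injective
      (D.Gamma1.neighborFinset x ∩ D.Gamma1.neighborFinset y) D.flag_val_inj,
      Finset.card_le_one]
    set img := (D.Gamma1.neighborFinset x ∩ D.Gamma1.neighborFinset y).image (fun z : D.Flag => z.1)
      with himg
    have key : ¬ ((x.1.1, y.1.2) ∈ img ∧ (y.1.1, x.1.2) ∈ img) := by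
      rintro ⟨h1, h2⟩
      have hsx : img ⊆ (D.Gamma1.neighborFinset x).image (fun z : D.Flag => z.1) :=
        Finset.image_subset_image Finset.inter_subset_left
      have h1' := (D.mem_val_image_neighbor.1 (hsx h1)).1.2
      have h2' := (D.mem_val_image_neighbor.1 (hsx h2)).1.2
      have hsubF : ({x.1.2, y.1.2} : Finset (Finset D.P)) ⊆
          D.blocks.filter (fun c => x.1.1 ∈ c ∧ y.1.1 ∈ c) := by
        intro c hcm
        simp only [Finset.mem_insert, Finset.mem_singleton] at hcm
        rcases hcm with rfl | rfl
        · exact Finset.mem_filter.2 ⟨x.2.1, x.2.2, h2'⟩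
        · exact Finset.mem_filter.2 ⟨y.2.1, h1', y.2.2⟩
      have := Finset.card_le_card hsubF
      rw [Finset.card_pair hc, D.pair_deg _ _ hp, hlam] at this
      omega
    intro a ha b hb
    have ha' := D.val_image_inter_subset x y hp hc ha
    have hb' := D.val_image_inter_subset x y hp hc hb
    simp only [Finset.mem_insert, Finset.mem_singleton] at ha' hb'
    rcases ha' with ha' | ha' <;> rcases hb' with hb' | hb'
    · exact ha'.trans hb'.symm
    · exact absurd ⟨ha' ▸ ha, hb' ▸ hb⟩ key
    · exact absurd ⟨hb' ▸ hb, ha' ▸ ha⟩ key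
    · exact ha'.trans hb'.symm
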